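/- On IC_n, the composite relations satisfy R*∘L*∘R* = L*∘R*∘L*, this common relation is the smallest equivalence relation D* containing both L* and R*, and for α, β ∈ IC_n one has (α, β) ∈ D* if and only if |im α| = |im β|. -/

import Mathlib

open scoped Classical

namespace ICCatalan

/-- Partial injective transformations on `Fin n` (representing the chain `[n] = {1,…,n}`). -/
abbrev PT (n : ℕ) := Fin n ≃. Fin n

/-- Composition (left-to-right, `x(αβ) = (xα)β`) makes `PT n` a monoid. -/
noncomputable instance instMonoidPT (n : ℕ) : Monoid (PT n) where
  mul f g := f.trans g
  one := PEquiv.refl (Fin n)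
  mul_assoc := PEquiv.trans_assoc
  one_mul := PEquiv.refl_trans
  mul_one := PEquiv.trans_refl

lemma mul_def {n : ℕ} (f g : PT n) : f * g = f.trans g := rfl

/-- The domain of a partial transformation. -/
def pdom {n : ℕ} (f : PT n) : Set (Fin n) := {x | ∃ y, f x = some y}

/-- The image of a partial transformation. -/
def pim {n : ℕ} (f : PT n) : Set (Fin n) := {y | ∃ x, f x = some y}

/-- The height `|im f|` of a partial transformation. -/
noncomputable def height {n : ℕ} (f : PT n) : ℕ := (pim f).ncard

/-- `f` is order-decreasing: `xf ≤ x` on the domain. -/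
def IsDecr {n : ℕ} (f : PT n) : Prop := ∀ x y : Fin n, f x = some y → y ≤ x

/-- `f` is isotone: `x ≤ y` implies `xf ≤ yf` on the domain. -/
def IsIso {n : ℕ} (f : PT n) : Prop :=
  ∀ x₁ x₂ y₁ y₂ : Fin n, f x₁ = some y₁ → f x₂ = some y₂ → x₁ ≤ x₂ → y₁ ≤ y₂

/-- The injective partial Catalan monoid `IC_n`: all isotone order-decreasing
partial injective transformations of `[n]`. -/
def IC (n : ℕ) : Set (PT n) := {f | IsIso f ∧ IsDecr f}

/-- `Q'_n = {α ∈ IC_n : 1 ∉ dom α}` (the least element of `Fin n` plays the role of `1 ∈ [n]`). -/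
def Qp (n : ℕ) : Set (PT n) := {f | f ∈ IC n ∧ ∀ x : Fin n, (x : ℕ) = 0 → f x = none}

/-- `S¹ : S` with an identity adjoined (realized inside `PT n`). -/
def SOne {n : ℕ} (S : Set (PT n)) : Set (PT n) := S ∪ {1}

/-- The starred Green relation `L*` of the subsemigroup `S`. -/
def LStar {n : ℕ} (S : Set (PT n)) (a b : PT n) : Prop :=
  ∀ x ∈ SOne S, ∀ y ∈ SOne S, (a * x = a * y ↔ b * x = b * y)

/-- The starred Green relation `R*` of the subsemigroup `S`. -/
def RStar {n : ℕ} (S : Set (PT n)) (a b : PT n) : Prop :=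
  ∀ x ∈ SOne S, ∀ y ∈ SOne S, (x * a = y * a ↔ x * b = y * b)

/-- The starred Green relation `H* = L* ∩ R*`. -/
def HStar {n : ℕ} (S : Set (PT n)) (a b : PT n) : Prop :=
  LStar S a b ∧ RStar S a b

/-- The partial identity on a subset `A` of `[n]`. -/
noncomputable def pid {n : ℕ} (A : Set (Fin n)) : PT n := PEquiv.ofSet A

/-- An essential element: exactly one point `y` of the domain is moved, and `yf = y - 1`. -/
def IsEssential {n : ℕ} (f : PT n) : Prop :=
  ∃ y z : Fin n, f y = some z ∧ (z : ℕ) + 1 = (y : ℕ) ∧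
    ∀ x w : Fin n, f x = some w → w ≠ x → x = y

/-- The shift of `f`: the number of non-fixed points of its domain. -/
noncomputable def shift {n : ℕ} (f : PT n) : ℕ := {x : Fin n | ∃ w, f x = some w ∧ w ≠ x}.ncard


/-- `L*` of `IC_n`, as a relation on the elements of `IC_n`. -/
def LSr (n : ℕ) : ↥(IC n) → ↥(IC n) → Prop := fun a b => LStar (IC n) a.1 b.1

/-- `R*` of `IC_n`, as a relation on the elements of `IC_n`. -/
def RSr (n : ℕ) : ↥(IC n) → ↥(IC n) → Prop := fun a b => RStar (IC n) a.1 b.1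

/-- `D*`: the smallest equivalence relation containing both `L*` and `R*`. -/
def DSr (n : ℕ) : ↥(IC n) → ↥(IC n) → Prop :=
  Relation.EqvGen (fun a b => LSr n a b ∨ RSr n a b)

lemma trans_apply {n : ℕ} (f g : PT n) (x : Fin n) : (f * g) x = (f x).bind g := rfl

lemma one_apply {n : ℕ} (x : Fin n) : (1 : PT n) x = some x := rfl

lemma pid_apply_mem {n : ℕ} {A : Set (Fin n)} {x : Fin n} (h : x ∈ A) : pid A x = some x :=
  PEquiv.ofSet_eq_some_self_iff.mpr h

lemma pid_apply_not_mem {n : ℕ} {A : Set (Fin n)} {x : Fin n} (h : x ∉ A) : pid A x = none := by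
  cases hx : pid A x with
  | none => rfl
  | some r =>
    obtain ⟨rfl, hm⟩ := PEquiv.ofSet_eq_some_iff.mp hx
    exact absurd hm h

lemma pid_mem_IC {n : ℕ} (A : Set (Fin n)) : pid A ∈ IC n := by
  constructor
  · intro x₁ x₂ y₁ y₂ h1 h2 hle
    obtain ⟨rfl, -⟩ := PEquiv.ofSet_eq_some_iff.mp h1
    obtain ⟨rfl, -⟩ := PEquiv.ofSet_eq_some_iff.mp h2
    exact hle
  · intro x y h
    obtain ⟨rfl, -⟩ := PEquiv.ofSet_eq_some_iff.mp h
    exact le_refl _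

lemma apply_eq_none_iff {n : ℕ} (f : PT n) (x : Fin n) : f x = none ↔ x ∉ pdom f := by
  cases h : f x <;> simp [pdom, h]

lemma mul_symm_self {n : ℕ} (f : PT n) : f * f.symm = pid (pdom f) := by
  rw [mul_def, PEquiv.self_trans_symm]
  congr 1
  ext x
  cases h : f x <;> simp [pdom, h, Option.isSome]

lemma pdom_symm {n : ℕ} (f : PT n) : pdom f.symm = pim f := by
  ext x; simp [pdom, pim, PEquiv.eq_some_iff]

lemma trans_pid_self {n : ℕ} (f : PT n) {T : Set (Fin n)} (h : pim f ⊆ T) : f * pid T = f := by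
  apply PEquiv.ext; intro p
  rw [trans_apply]
  cases hp : f p with
  | none => rfl
  | some q => simpa using pid_apply_mem (h ⟨p, hp⟩)


lemma lmul_eq_iff {n : ℕ} (f x y : PT n) : f * x = f * y ↔ ∀ q ∈ pim f, x q = y q := by
  constructor
  · intro h q ⟨p, hp⟩
    have := DFunLike.congr_fun h p
    rw [trans_apply, trans_apply, hp] at this
    simpa using this
  · intro h
    apply PEquiv.ext; intro p
    rw [trans_apply, trans_apply]
    cases hp : f p with
    | none => rfl
    | some q => simpa using h q ⟨p, hp⟩

lemma rmul_eq_iff {n : ℕ} (f x y : PT n) :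
    x * f = y * f ↔ x * pid (pdom f) = y * pid (pdom f) := by
  constructor
  · intro h
    have := congrArg (· * f.symm) h
    simp only [mul_assoc, mul_symm_self] at this
    exact this
  · intro h
    have := congrArg (· * f) h
    have hpid : pid (pdom f) * f = f := by
      rw [← mul_symm_self, mul_assoc]
      have h2 : f.symm * f = pid (pim f) := by
        rw [← pdom_symm]; exact (PEquiv.symm_symm f) ▸ mul_symm_self f.symm
      rw [h2, trans_pid_self f (le_refl _)]
    rwa [mul_assoc, mul_assoc, hpid] at this

lemma one_mem_SOne {n : ℕ} (S : Set (PT n)) : (1 : PT n) ∈ SOne S := Or.inr rfl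

lemma pid_mem_SOne {n : ℕ} (A : Set (Fin n)) : pid A ∈ SOne (IC n) := Or.inl (pid_mem_IC A)

lemma lstar_subset {n : ℕ} {a b : PT n} (h : LStar (IC n) a b) : pim a ⊆ pim b := by
  intro q hq
  by_contra hqb
  obtain ⟨p, hp⟩ := hq
  have hb : b * 1 = b * pid ({q}ᶜ) := by
    rw [lmul_eq_iff]
    intro r hr
    have hrq : r ∈ ({q}ᶜ : Set (Fin n)) := by
      simp only [Set.mem_compl_iff, Set.mem_singleton_iff]
      rintro rfl; exact hqb hr
    rw [one_apply, pid_apply_mem hrq]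
  have ha : a * 1 = a * pid ({q}ᶜ) := ((h _ (one_mem_SOne _) _ (pid_mem_SOne _)).mpr hb)
  rw [lmul_eq_iff] at ha
  have := ha q ⟨p, hp⟩
  rw [one_apply, pid_apply_not_mem (by simp)] at this
  exact Option.some_ne_none _ this

lemma lstar_iff {n : ℕ} {a b : PT n} :
    LStar (IC n) a b ↔ pim a = pim b := by
  constructor
  · intro h
    exact le_antisymm (lstar_subset h) (lstar_subset (fun x hx y hy => (h x hx y hy).symm))
  · intro h x _ y _
    rw [lmul_eq_iff, lmul_eq_iff, h]

lemma rstar_subset {n : ℕ} {a b : PT n} (h : RStar (IC n) a b) : pdom a ⊆ pdom b := by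
  intro q hq
  by_contra hqb
  obtain ⟨r, hr⟩ := hq
  have hb : (1 : PT n) * b = pid ({q}ᶜ) * b := by
    apply PEquiv.ext; intro p
    rw [trans_apply, trans_apply, one_apply]
    by_cases hpq : p = q
    · subst hpq
      rw [pid_apply_not_mem (by simp)]
      simp [(apply_eq_none_iff _ _).mpr hqb]
    · rw [pid_apply_mem (by simpa using hpq)]
  have ha : (1 : PT n) * a = pid ({q}ᶜ) * a :=
    ((h _ (one_mem_SOne _) _ (pid_mem_SOne _)).mpr hb)
  have := DFunLike.congr_fun ha q
  rw [trans_apply, trans_apply, one_apply, pid_apply_not_mem (by simp)] at this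
  simp [hr] at this

lemma rstar_iff {n : ℕ} {a b : PT n} :
    RStar (IC n) a b ↔ pdom a = pdom b := by
  constructor
  · intro h
    exact le_antisymm (rstar_subset h) (rstar_subset (fun x hx y hy => (h x hx y hy).symm))
  · intro h x _ y _
    rw [rmul_eq_iff, rmul_eq_iff b, h]

lemma height_eq_dom_ncard {n : ℕ} (f : PT n) : height f = (pdom f).ncard := by
  classical
  have himg : (fun x => (f x).getD x) '' pdom f = pim f := by
    ext y
    constructor
    · rintro ⟨x, ⟨z, hz⟩, rfl⟩
      exact ⟨x, by simp [hz]⟩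
    · rintro ⟨x, hx⟩
      exact ⟨x, ⟨y, hx⟩, by simp [hx]⟩
  have hinj : Set.InjOn (fun x => (f x).getD x) (pdom f) := by
    rintro x ⟨z, hz⟩ x' ⟨z', hz'⟩ hE
    simp only [hz, hz', Option.getD_some] at hE
    subst hE
    have h1 := (PEquiv.eq_some_iff f).mpr hz
    have h2 := (PEquiv.eq_some_iff f).mpr hz'
    rw [h1] at h2
    exact (Option.some_inj.mp h2)
  rw [height, ← himg, Set.ncard_image_of_injOn hinj]


noncomputable def pick {n k : ℕ} (u v : Fin k → Fin n) : Fin n → Option (Fin n) :=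
  fun x => if h : ∃ i, u i = x then some (v h.choose) else none

lemma pick_eq_some {n k : ℕ} (u v : Fin k → Fin n) (hu : Function.Injective u)
    (x y : Fin n) : pick u v x = some y ↔ ∃ i, u i = x ∧ v i = y := by
  unfold pick
  split_ifs with h
  · simp only [Option.some_inj]
    constructor
    · rintro rfl; exact ⟨h.choose, h.choose_spec, rfl⟩
    · rintro ⟨i, hi, rfl⟩
      have : h.choose = i := hu (h.choose_spec.trans hi.symm)
      rw [this]
  · constructor
    · intro hc; exact hc.elim
    · rintro ⟨i, hi, -⟩; exact absurd ⟨i, hi⟩ h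

noncomputable def mk2 {n k : ℕ} (u v : Fin k → Fin n)
    (hu : Function.Injective u) (hv : Function.Injective v) : PT n where
  toFun := pick u v
  invFun := pick v u
  inv a b := by
    simp only [Option.mem_def, pick_eq_some u v hu, pick_eq_some v u hv]
    tauto

lemma mk2_eq_some {n k : ℕ} (u v : Fin k → Fin n)
    (hu : Function.Injective u) (hv : Function.Injective v) (x y : Fin n) :
    mk2 u v hu hv x = some y ↔ ∃ i, u i = x ∧ v i = y :=
  pick_eq_some u v hu x y

lemma pdom_mk2 {n k : ℕ} (u v : Fin k → Fin n) (hu : Function.Injective u)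
    (hv : Function.Injective v) : pdom (mk2 u v hu hv) = Set.range u := by
  ext x
  simp only [pdom, Set.mem_setOf_eq, mk2_eq_some, Set.mem_range]
  constructor
  · rintro ⟨y, i, hi, -⟩; exact ⟨i, hi⟩
  · rintro ⟨i, hi⟩; exact ⟨v i, i, hi, rfl⟩

lemma pim_mk2 {n k : ℕ} (u v : Fin k → Fin n) (hu : Function.Injective u)
    (hv : Function.Injective v) : pim (mk2 u v hu hv) = Set.range v := by
  ext y
  simp only [pim, Set.mem_setOf_eq, mk2_eq_some, Set.mem_range]
  constructor
  · rintro ⟨x, i, -, hi⟩; exact ⟨i, hi⟩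
  · rintro ⟨i, hi⟩; exact ⟨u i, i, rfl, hi⟩

lemma mk2_mem_IC {n k : ℕ} {u v : Fin k → Fin n} (hu : StrictMono u)
    (hv : StrictMono v) (hd : ∀ i, v i ≤ u i) :
    mk2 u v hu.injective hv.injective ∈ IC n := by
  constructor
  · intro x₁ x₂ y₁ y₂ h1 h2 hle
    obtain ⟨i₁, rfl, rfl⟩ := (mk2_eq_some _ _ _ _ _ _).mp h1
    obtain ⟨i₂, rfl, rfl⟩ := (mk2_eq_some _ _ _ _ _ _).mp h2
    exact hv.monotone (hu.le_iff_le.mp hle)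
  · intro x y h
    obtain ⟨i, rfl, rfl⟩ := (mk2_eq_some _ _ _ _ _ _).mp h
    exact hd i

lemma strictMono_val_le {n k : ℕ} {u : Fin k → Fin n} (hu : StrictMono u) :
    ∀ i : Fin k, (i : ℕ) ≤ (u i : ℕ) := by
  have H : ∀ m : ℕ, ∀ i : Fin k, (i : ℕ) = m → m ≤ (u i : ℕ) := by
    intro m
    induction m with
    | zero => intro i _; exact Nat.zero_le _
    | succ p ih =>
      intro i hi
      have hp : p < k := by omega
      have h1 := ih ⟨p, hp⟩ rfl
      have h2 : (⟨p, hp⟩ : Fin k) < i := by rw [Fin.lt_def]; simp; omega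
      have h3 := hu h2
      rw [Fin.lt_def] at h3
      omega
  exact fun i => H (i : ℕ) i rfl

noncomputable def enum {n : ℕ} (A : Set (Fin n)) : Fin A.ncard → Fin n :=
  fun i => A.toFinite.toFinset.orderEmbOfFin
    (by rw [← Set.ncard_eq_toFinset_card]) i

lemma enum_strictMono {n : ℕ} (A : Set (Fin n)) : StrictMono (enum A) :=
  (Finset.orderEmbOfFin _ _).strictMono

lemma enum_range {n : ℕ} (A : Set (Fin n)) : Set.range (enum A) = A := by
  unfold enum
  rw [Finset.range_orderEmbOfFin, Set.Finite.coe_toFinset]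

lemma ncard_le_n {n : ℕ} (A : Set (Fin n)) : A.ncard ≤ n := by
  have := Set.ncard_le_ncard (Set.subset_univ A) Set.finite_univ
  simpa [Set.ncard_univ, Nat.card_eq_fintype_card] using this

def seg {m n : ℕ} (h : m ≤ n) : Fin m → Fin n :=
  fun i => ⟨(i : ℕ), lt_of_lt_of_le i.2 h⟩

lemma seg_strictMono {m n : ℕ} (h : m ≤ n) : StrictMono (seg h) := by
  intro i j hij
  rw [Fin.lt_def] at hij ⊢
  exact hij

lemma seg_range {m n : ℕ} (h : m ≤ n) :
    Set.range (seg h) = {x : Fin n | (x : ℕ) < m} := by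
  ext x
  constructor
  · rintro ⟨i, rfl⟩; exact i.2
  · intro hx; exact ⟨⟨(x : ℕ), hx⟩, by simp [seg]⟩


lemma exists_RLR {n : ℕ} {a b : PT n} (h : height a = height b) :
    ∃ c d : PT n, c ∈ IC n ∧ d ∈ IC n ∧ pdom a = pdom c ∧ pim c = pim d ∧ pdom d = pdom b := by
  have hk : (pdom a).ncard = (pdom b).ncard := by
    rw [← height_eq_dom_ncard, ← height_eq_dom_ncard, h]
  have hda : ∀ i : Fin (pdom a).ncard, seg (ncard_le_n (pdom a)) i ≤ enum (pdom a) i := by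
    intro i
    rw [Fin.le_def]
    exact strictMono_val_le (enum_strictMono _) i
  have hdb : ∀ i : Fin (pdom b).ncard, seg (ncard_le_n (pdom b)) i ≤ enum (pdom b) i := by
    intro i
    rw [Fin.le_def]
    exact strictMono_val_le (enum_strictMono _) i
  refine ⟨mk2 (enum (pdom a)) (seg (ncard_le_n (pdom a)))
      (enum_strictMono _).injective (seg_strictMono _).injective,
    mk2 (enum (pdom b)) (seg (ncard_le_n (pdom b)))
      (enum_strictMono _).injective (seg_strictMono _).injective,
    mk2_mem_IC (enum_strictMono _) (seg_strictMono _) hda,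
    mk2_mem_IC (enum_strictMono _) (seg_strictMono _) hdb, ?_, ?_, ?_⟩
  · rw [pdom_mk2, enum_range]
  · rw [pim_mk2, pim_mk2, seg_range, seg_range, hk]
  · rw [pdom_mk2, enum_range]

lemma exists_LRL {n : ℕ} {a b : PT n} (h : height a = height b) :
    ∃ c d : PT n, c ∈ IC n ∧ d ∈ IC n ∧ pim a = pim c ∧ pdom c = pdom d ∧ pim d = pim b := by
  have hk : (pim a).ncard = (pim b).ncard := h
  set ea : Fin (pim a).ncard → Fin n := enum (pim a) with hea
  set eb : Fin (pim a).ncard → Fin n := fun i => enum (pim b) (Fin.cast hk i) with heb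
  have hcast : StrictMono (fun i : Fin (pim a).ncard => Fin.cast hk i) := by
    intro i j hij
    rw [Fin.lt_def] at hij ⊢
    simpa using hij
  have hbs : StrictMono eb := (enum_strictMono (pim b)).comp hcast
  have has : StrictMono ea := enum_strictMono _
  set u : Fin (pim a).ncard → Fin n := fun i => max (ea i) (eb i) with hu
  have hus : StrictMono u := fun i j hij => max_lt_max (has hij) (hbs hij)
  have hrangeb : Set.range eb = pim b := by
    rw [← enum_range (pim b)]
    ext y
    constructor
    · rintro ⟨i, rfl⟩; exact ⟨Fin.cast hk i, rfl⟩
    · rintro ⟨j, rfl⟩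
      refine ⟨Fin.cast hk.symm j, ?_⟩
      have hjj : Fin.cast hk (Fin.cast hk.symm j) = j := by apply Fin.ext; simp
      simp only [heb, hjj]
  refine ⟨mk2 u ea hus.injective has.injective,
    mk2 u eb hus.injective hbs.injective,
    mk2_mem_IC hus has (fun i => le_max_left _ _),
    mk2_mem_IC hus hbs (fun i => le_max_right _ _), ?_, ?_, ?_⟩
  · rw [pim_mk2, enum_range]
  · rw [pdom_mk2, pdom_mk2]
  · rw [pim_mk2, hrangeb]


/-- on `IC_n` one has `R*∘L*∘R* = L*∘R*∘L*`, this common relation equals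
`D*` (the smallest equivalence containing `L*` and `R*`), and `(α,β) ∈ D*` iff
`|im α| = |im β|`. -/
theorem stmt5 (n : ℕ) (hn : 0 < n) :
    (Relation.Comp (Relation.Comp (RSr n) (LSr n)) (RSr n) =
      Relation.Comp (Relation.Comp (LSr n) (RSr n)) (LSr n)) ∧
    (Relation.Comp (Relation.Comp (RSr n) (LSr n)) (RSr n) = DSr n) ∧
    (∀ a b : ↥(IC n), DSr n a b ↔ height (a : PT n) = height (b : PT n)) := by
  have hgtL : ∀ {x y : ↥(IC n)}, LSr n x y → height x.1 = height y.1 := by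
    intro x y hxy
    unfold height
    rw [lstar_iff.mp hxy]
  have hgtR : ∀ {x y : ↥(IC n)}, RSr n x y → height x.1 = height y.1 := by
    intro x y hxy
    rw [height_eq_dom_ncard, height_eq_dom_ncard, rstar_iff.mp hxy]
  have hH : ∀ a b : ↥(IC n),
      Relation.Comp (Relation.Comp (RSr n) (LSr n)) (RSr n) a b ↔
        height (a : PT n) = height (b : PT n) := by
    intro a b
    constructor
    · rintro ⟨d, ⟨c, hac, hcd⟩, hdb⟩
      exact ((hgtR hac).trans (hgtL hcd)).trans (hgtR hdb)
    · intro h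
      obtain ⟨c, d, hc, hd, h1, h2, h3⟩ := exists_RLR h
      refine ⟨⟨d, hd⟩, ⟨⟨c, hc⟩, ?_, ?_⟩, ?_⟩
      · exact rstar_iff.mpr h1
      · exact lstar_iff.mpr h2
      · exact rstar_iff.mpr h3
  have hL : ∀ a b : ↥(IC n),
      Relation.Comp (Relation.Comp (LSr n) (RSr n)) (LSr n) a b ↔
        height (a : PT n) = height (b : PT n) := by
    intro a b
    constructor
    · rintro ⟨d, ⟨c, hac, hcd⟩, hdb⟩
      exact ((hgtL hac).trans (hgtR hcd)).trans (hgtL hdb)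
    · intro h
      obtain ⟨c, d, hc, hd, h1, h2, h3⟩ := exists_LRL h
      refine ⟨⟨d, hd⟩, ⟨⟨c, hc⟩, ?_, ?_⟩, ?_⟩
      · exact lstar_iff.mpr h1
      · exact rstar_iff.mpr h2
      · exact lstar_iff.mpr h3
  have hD : ∀ a b : ↥(IC n), DSr n a b ↔ height (a : PT n) = height (b : PT n) := by
    intro a b
    constructor
    · intro h
      induction h with
      | rel x y hxy => exact hxy.elim (fun h' => hgtL h') (fun h' => hgtR h')
      | refl x => rfl
      | symm _ _ _ ih => exact ih.symm
      | trans _ _ _ _ _ ih1 ih2 => exact ih1.trans ih2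
    · intro h
      obtain ⟨c, d, hc, hd, h1, h2, h3⟩ := exists_RLR h
      have s1 : RSr n a ⟨c, hc⟩ := rstar_iff.mpr h1
      have s2 : LSr n ⟨c, hc⟩ ⟨d, hd⟩ := lstar_iff.mpr h2
      have s3 : RSr n ⟨d, hd⟩ b := rstar_iff.mpr h3
      exact Relation.EqvGen.trans _ _ _
        (Relation.EqvGen.trans _ _ _
          (Relation.EqvGen.rel _ _ (Or.inr s1))
          (Relation.EqvGen.rel _ _ (Or.inl s2)))
        (Relation.EqvGen.rel _ _ (Or.inr s3))
  refine ⟨?_, ?_, hD⟩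
  · funext a b
    exact propext ((hH a b).trans (hL a b).symm)
  · funext a b
    exact propext ((hH a b).trans (hD a b).symm)


end ICCatalan
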